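/- Let P_T > 0 and let 𝒬 = { Q ∈ ℂ^{Nt×Nt} : Q Hermitian, Q ⪰ 0, tr(Q) ≤ P_T }. Let X ∈ ℂ^{Nt×Nt} be Hermitian with eigendecomposition X = U diag(x₁,…,x_{N_t}) U† (U unitary), and suppose Σᵢ max{xᵢ, 0} ≥ P_T (so the trace constraint is active). Let c ∈ ℝ be the unique root of Σᵢ max{xᵢ − c, 0} = P_T. Then the Frobenius-norm projection of X onto 𝒬, i.e. the unique minimizer of ‖Q − X‖_F over Q ∈ 𝒬, is Π_𝒬(X) = U diag(max{x₁ − c, 0}, …, max{x_{N_t} − c, 0}) U†. -/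

import Mathlib

open Matrix
open scoped ComplexOrder

/-- The Frobenius norm `‖M‖_F = sqrt(tr(Mᴴ M))` of a complex matrix. -/
noncomputable def frobNorm {n : ℕ} (M : Matrix (Fin n) (Fin n) ℂ) : ℝ :=
  Real.sqrt (Matrix.trace (Mᴴ * M)).re

namespace Stmt12Aux

lemma trace_re_eq_sum {n : ℕ} (M : Matrix (Fin n) (Fin n) ℂ) :
    (Matrix.trace (Mᴴ * M)).re = ∑ i, ∑ j, Complex.normSq (M j i) := by
  simp [Matrix.trace, Matrix.mul_apply, Matrix.conjTranspose_apply, Matrix.diag,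
    Complex.re_sum, mul_comm, Complex.mul_conj]

lemma trace_re_nonneg {n : ℕ} (M : Matrix (Fin n) (Fin n) ℂ) :
    0 ≤ (Matrix.trace (Mᴴ * M)).re := by
  rw [trace_re_eq_sum]
  exact Finset.sum_nonneg fun i _ => Finset.sum_nonneg fun j _ => Complex.normSq_nonneg _

lemma trace_re_pos {n : ℕ} {M : Matrix (Fin n) (Fin n) ℂ} (h : M ≠ 0) :
    0 < (Matrix.trace (Mᴴ * M)).re := by
  rw [trace_re_eq_sum]
  obtain ⟨j, i, hij⟩ : ∃ j i, M j i ≠ 0 := by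
    by_contra hcon
    push_neg at hcon
    exact h (by ext a b; simp [hcon a b])
  refine Finset.sum_pos' (fun i' _ => Finset.sum_nonneg fun j' _ => Complex.normSq_nonneg _)
    ⟨i, Finset.mem_univ i, ?_⟩
  exact Finset.sum_pos' (fun j' _ => Complex.normSq_nonneg _)
    ⟨j, Finset.mem_univ j, Complex.normSq_pos.mpr hij⟩

lemma unitary_invariance {n : ℕ} {U : Matrix (Fin n) (Fin n) ℂ}
    (hU : U ∈ Matrix.unitaryGroup (Fin n) ℂ) (M : Matrix (Fin n) (Fin n) ℂ) :
    Matrix.trace ((U * M * Uᴴ)ᴴ * (U * M * Uᴴ)) = Matrix.trace (Mᴴ * M) := by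
  have h1 : Uᴴ * U = 1 := hU.1
  have key : (U * M * Uᴴ)ᴴ * (U * M * Uᴴ) = U * (Mᴴ * M) * Uᴴ := by
    simp only [Matrix.conjTranspose_mul, Matrix.conjTranspose_conjTranspose, Matrix.mul_assoc]
    rw [← Matrix.mul_assoc Uᴴ U (M * Uᴴ), h1, Matrix.one_mul]
  rw [key, Matrix.trace_mul_cycle, ← Matrix.mul_assoc, h1, Matrix.one_mul]

lemma c_nonneg {n : ℕ} {PT c : ℝ} (hPT : 0 < PT) {x : Fin n → ℝ}
    (hactive : PT ≤ ∑ i, max (x i) 0) (hc : ∑ i, max (x i - c) 0 = PT) : 0 ≤ c := by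
  by_contra hneg
  push_neg at hneg
  have hpt : ∀ i ∈ Finset.univ, max (x i) 0 ≤ max (x (i : Fin n) - c) 0 := fun i _ =>
    max_le_max (by linarith) le_rfl
  have hsum2 : ∑ i, max (x i - c) 0 ≤ ∑ i, max (x i) 0 := by rw [hc]; exact hactive
  have heq : ∀ i ∈ Finset.univ, max (x (i : Fin n)) 0 = max (x i - c) 0 :=
    (Finset.sum_eq_sum_iff_of_le hpt).mp
      (le_antisymm (Finset.sum_le_sum hpt) hsum2)
  obtain ⟨i, hi⟩ : ∃ i, 0 < max (x i - c) 0 := by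
    by_contra hall
    push_neg at hall
    have : ∑ i, max (x i - c) 0 = 0 :=
      Finset.sum_eq_zero fun i _ => le_antisymm (hall i) (le_max_right _ _)
    linarith [hc ▸ this]
  have hpos : 0 < x i - c := (lt_max_iff.mp hi).resolve_right (lt_irrefl 0)
  have hxc : max (x i - c) 0 = x i - c := max_eq_left hpos.le
  have h2 := heq i (Finset.mem_univ i)
  rcases le_or_gt 0 (x i) with h | h
  · rw [max_eq_left h, hxc] at h2; linarith
  · rw [max_eq_right h.le, hxc] at h2
    linarith

lemma scalar_inner {n : ℕ} {PT c : ℝ} (hc0 : 0 ≤ c) {x r : Fin n → ℝ}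
    (hc : ∑ i, max (x i - c) 0 = PT)
    (hr : ∀ i, 0 ≤ r i) (htr : ∑ i, r i ≤ PT) :
    0 ≤ ∑ i, (max (x i - c) 0 - x i) * (r i - max (x i - c) 0) := by
  have hterm : ∀ i ∈ Finset.univ,
      c * max (x (i : Fin n) - c) 0 - c * r i ≤
        (max (x i - c) 0 - x i) * (r i - max (x i - c) 0) := by
    intro i _
    rcases le_total (x i) c with h | h
    · rw [max_eq_right (by linarith)]
      have := hr i
      nlinarith
    · rw [max_eq_left (by linarith)]
      ring_nf
      nlinarith
  calc (0:ℝ) ≤ c * PT - c * (∑ i, r i) := by nlinarith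
    _ = ∑ i, (c * max (x i - c) 0 - c * r i) := by
        rw [Finset.sum_sub_distrib, ← Finset.mul_sum, ← Finset.mul_sum, hc]
    _ ≤ _ := Finset.sum_le_sum hterm

end Stmt12Aux

/-- (Water-filling projection.) Let `X` be Hermitian with
eigendecomposition `X = U diag(x) Uᴴ` (`U` unitary, `x` real), suppose
`Σᵢ max(xᵢ, 0) ≥ P_T`, and let `c` be a root of `Σᵢ max(xᵢ − c, 0) = P_T`. Then
`Π_𝒬(X) = U diag(max(xᵢ − c, 0)) Uᴴ` is the unique Frobenius-norm projection of `X`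
onto `𝒬 = { Q ⪰ 0 : tr Q ≤ P_T }`: it lies in `𝒬` and is strictly closer to `X`
than any other point of `𝒬`. -/
theorem stmt_12 {Nt : ℕ} (PT : ℝ) (hPT : 0 < PT)
    (X U : Matrix (Fin Nt) (Fin Nt) ℂ) (x : Fin Nt → ℝ)
    (hX : X.IsHermitian)
    (hU : U ∈ Matrix.unitaryGroup (Fin Nt) ℂ)
    (hdecomp : X = U * Matrix.diagonal (fun i => (x i : ℂ)) * Uᴴ)
    (hactive : PT ≤ ∑ i, max (x i) 0)
    (c : ℝ) (hc : ∑ i, max (x i - c) 0 = PT) :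
    (U * Matrix.diagonal (fun i => ((max (x i - c) 0 : ℝ) : ℂ)) * Uᴴ).PosSemidef ∧
    (Matrix.trace (U * Matrix.diagonal (fun i => ((max (x i - c) 0 : ℝ) : ℂ)) * Uᴴ)).re ≤ PT ∧
    ∀ Q : Matrix (Fin Nt) (Fin Nt) ℂ, Q.PosSemidef → (Matrix.trace Q).re ≤ PT →
      Q ≠ U * Matrix.diagonal (fun i => ((max (x i - c) 0 : ℝ) : ℂ)) * Uᴴ →
      frobNorm (U * Matrix.diagonal (fun i => ((max (x i - c) 0 : ℝ) : ℂ)) * Uᴴ - X)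
        < frobNorm (Q - X) := by
  have h1 : Uᴴ * U = 1 := hU.1
  have h2 : U * Uᴴ = 1 := hU.2
  set d : Fin Nt → ℝ := fun i => max (x i - c) 0 with hd
  set D : Matrix (Fin Nt) (Fin Nt) ℂ := Matrix.diagonal (fun i => ((d i : ℝ) : ℂ)) with hD
  set Dx : Matrix (Fin Nt) (Fin Nt) ℂ := Matrix.diagonal (fun i => ((x i : ℝ) : ℂ)) with hDx
  have hDpsd : D.PosSemidef := by
    refine Matrix.posSemidef_diagonal_iff.mpr fun i => ?_
    exact_mod_cast (le_max_right (x i - c) 0 : (0:ℝ) ≤ d i)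
  have htrD : Matrix.trace (U * D * Uᴴ) = Matrix.trace D := by
    rw [Matrix.trace_mul_cycle, h1, Matrix.one_mul]
  refine ⟨hDpsd.mul_mul_conjTranspose_same U, ?_, ?_⟩
  · rw [htrD]
    have : Matrix.trace D = ((∑ i, d i : ℝ) : ℂ) := by
      simp [hD, Matrix.trace_diagonal]
    rw [this, Complex.ofReal_re, hc]
  · intro Q hQ hQtr hQne
    set R : Matrix (Fin Nt) (Fin Nt) ℂ := Uᴴ * Q * U with hRdef
    have hQR : Q = U * R * Uᴴ := by
      have : U * (Uᴴ * Q * U) * Uᴴ = (U * Uᴴ) * Q * (U * Uᴴ) := by noncomm_ring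
      rw [hRdef, this, h2, Matrix.one_mul, Matrix.mul_one]
    have hR : R.PosSemidef := hQ.conjTranspose_mul_mul_same U
    have htrR : Matrix.trace R = Matrix.trace Q := by
      rw [hRdef, Matrix.trace_mul_cycle, h2, Matrix.one_mul]
    have hr : ∀ i, 0 ≤ (R i i).re := by
      intro i
      have h0 := hR.dotProduct_mulVec_nonneg (Pi.single i 1)
      simp [dotProduct, Matrix.mulVec, Pi.single_apply] at h0
      exact (Complex.le_def.mp h0).1
    have htr' : ∑ i, (R i i).re ≤ PT := by
      have : ∑ i, (R i i).re = (Matrix.trace R).re := by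
        rw [Matrix.trace]; exact (Complex.re_sum _ _).symm
      rw [this, htrR]; exact hQtr
    have hc0 : 0 ≤ c := Stmt12Aux.c_nonneg hPT hactive hc
    have hS : 0 ≤ ∑ i, (d i - x i) * ((R i i).re - d i) :=
      Stmt12Aux.scalar_inner hc0 hc hr htr'
    -- matrix differences
    have hPX : U * D * Uᴴ - X = U * (D - Dx) * Uᴴ := by
      rw [hdecomp, Matrix.mul_sub, Matrix.sub_mul]
    have hQX : Q - X = U * (R - Dx) * Uᴴ := by
      rw [hdecomp, hQR, Matrix.mul_sub, Matrix.sub_mul]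
    have hRD : R ≠ D := by
      intro h
      exact hQne (by rw [hQR, h])
    -- key identity
    have hkey : (Matrix.trace ((R - Dx)ᴴ * (R - Dx))).re
        = (Matrix.trace ((R - D)ᴴ * (R - D))).re
          + (Matrix.trace ((D - Dx)ᴴ * (D - Dx))).re
          + 2 * ∑ i, (d i - x i) * ((R i i).re - d i) := by
      rw [Stmt12Aux.trace_re_eq_sum, Stmt12Aux.trace_re_eq_sum, Stmt12Aux.trace_re_eq_sum,
        ← Finset.sum_add_distrib, Finset.mul_sum, ← Finset.sum_add_distrib]
      refine Finset.sum_congr rfl fun i _ => ?_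
      rw [Finset.sum_eq_sum_sdiff_singleton_add (Finset.mem_univ i) (fun j => Complex.normSq ((R - Dx) j i)),
        Finset.sum_eq_sum_sdiff_singleton_add (Finset.mem_univ i) (fun j => Complex.normSq ((R - D) j i)),
        Finset.sum_eq_sum_sdiff_singleton_add (Finset.mem_univ i) (fun j => Complex.normSq ((D - Dx) j i))]
      have hoff1 : ∀ j ∈ Finset.univ \ {i}, Complex.normSq ((R - Dx) j i)
          = Complex.normSq ((R - D) j i) := by
        intro j hj
        have hji : j ≠ i := by simpa using (Finset.mem_sdiff.mp hj).2
        simp [hD, hDx, Matrix.sub_apply, Matrix.diagonal_apply_ne _ hji]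
      have hoff2 : ∀ j ∈ Finset.univ \ {i}, Complex.normSq ((D - Dx) j i) = 0 := by
        intro j hj
        have hji : j ≠ i := by simpa using (Finset.mem_sdiff.mp hj).2
        simp [hD, hDx, Matrix.sub_apply, Matrix.diagonal_apply_ne _ hji]
      rw [Finset.sum_congr rfl hoff1, Finset.sum_congr rfl hoff2]
      have hdiag : Complex.normSq ((R - Dx) i i)
          = Complex.normSq ((R - D) i i) + Complex.normSq ((D - Dx) i i)
            + 2 * ((d i - x i) * ((R i i).re - d i)) := by
        simp only [hD, hDx, Matrix.sub_apply, Matrix.diagonal_apply_eq,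
          Complex.normSq_apply, Complex.sub_re, Complex.sub_im,
          Complex.ofReal_re, Complex.ofReal_im]
        ring
      rw [hdiag, Finset.sum_const_zero]
      ring
    have hCpos : 0 < (Matrix.trace ((R - D)ᴴ * (R - D))).re :=
      Stmt12Aux.trace_re_pos (sub_ne_zero.mpr hRD)
    have hfinal : (Matrix.trace ((D - Dx)ᴴ * (D - Dx))).re
        < (Matrix.trace ((R - Dx)ᴴ * (R - Dx))).re := by
      rw [hkey]; linarith
    show Real.sqrt _ < Real.sqrt _
    rw [hPX, hQX, Stmt12Aux.unitary_invariance hU, Stmt12Aux.unitary_invariance hU]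
    exact Real.sqrt_lt_sqrt (Stmt12Aux.trace_re_nonneg _) hfinal
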